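/- Let T > 0 and let f : ℝ → ℝ be a C¹ function with compact support contained in [−T, T]. Then for every N > 0 and every x ∈ ℝ with |x| ≥ 2T + 1, one has |F_N f(x)| ≤ (‖f‖_∞ + ‖f′‖_∞)/(πN) · log(1 + 2T/(|x| − T)), where ‖·‖_∞ denotes the supremum norm on ℝ. -/

import Mathlib

open MeasureTheory Filter Set


lemma cont_zero_right {f : ℝ → ℝ} (hf : Continuous f) {T : ℝ}
    (h : ∀ y, T < y → f y = 0) : f T = 0 := by
  have h1 : Set.Ioi T ⊆ f ⁻¹' {0} := fun y hy => h y hy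
  have h2 : IsClosed (f ⁻¹' {0}) := isClosed_singleton.preimage hf
  have h3 : T ∈ closure (Set.Ioi T) := by rw [closure_Ioi]; exact self_mem_Ici
  have := (h2.closure_subset_iff.mpr h1) h3
  simpa using this

lemma cont_zero_left {f : ℝ → ℝ} (hf : Continuous f) {T : ℝ}
    (h : ∀ y, y < T → f y = 0) : f T = 0 := by
  have h1 : Set.Iio T ⊆ f ⁻¹' {0} := fun y hy => h y hy
  have h2 : IsClosed (f ⁻¹' {0}) := isClosed_singleton.preimage hf
  have h3 : T ∈ closure (Set.Iio T) := by rw [closure_Iio]; exact self_mem_Iic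
  have := (h2.closure_subset_iff.mpr h1) h3
  simpa using this

lemma integral_abs_inv_eq (T x : ℝ) (hT : 0 < T) (hx : 2*T+1 ≤ |x|) :
    ∫ y in (-T)..T, |x - y|⁻¹ = Real.log (1 + 2*T/(|x|-T)) := by
  have hT' : -T ≤ T := by linarith
  rcases le_or_gt 0 x with hx0 | hx0
  · have hxx : |x| = x := abs_of_nonneg hx0
    rw [hxx] at hx ⊢
    have h1 : Set.EqOn (fun y => |x - y|⁻¹) (fun y => (x - y)⁻¹) (Set.uIcc (-T) T) := by
      intro y hy
      rw [Set.uIcc_of_le hT'] at hy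
      simp only
      rw [abs_of_pos]
      linarith [hy.2]
    rw [intervalIntegral.integral_congr h1,
      intervalIntegral.integral_comp_sub_left (fun u => u⁻¹) x,
      integral_inv_of_pos (by linarith) (by linarith)]
    congr 1
    have h3 : x - T ≠ 0 := by intro h; nlinarith [eq_of_sub_eq_zero h]
    field_simp
    ring
  · have hxx : |x| = -x := abs_of_neg hx0
    rw [hxx] at hx ⊢
    have h1 : Set.EqOn (fun y => |x - y|⁻¹) (fun y => (y - x)⁻¹) (Set.uIcc (-T) T) := by
      intro y hy
      rw [Set.uIcc_of_le hT'] at hy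
      simp only
      rw [abs_sub_comm, abs_of_pos]
      linarith [hy.1]
    rw [intervalIntegral.integral_congr h1]
    have h2 : (∫ y in (-T)..T, (y - x)⁻¹) = ∫ u in (-T - x)..(T - x), u⁻¹ :=
      (intervalIntegral.integral_comp_sub_right (fun u => u⁻¹) x)
    rw [h2, integral_inv_of_pos (by linarith) (by linarith)]
    congr 1
    have h3 : -T - x ≠ 0 := by intro h; nlinarith [eq_of_sub_eq_zero h]
    have h4 : -x - T ≠ 0 := by intro h; nlinarith [eq_of_sub_eq_zero h]
    field_simp
    ring


/-- The Dirichlet operator `F_N g (x) = (1/π) ∫_ℝ sin(N(x−y))/(x−y) · g(y) dy`. -/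
noncomputable def dirichletOp (N : ℝ) (g : ℝ → ℝ) (x : ℝ) : ℝ :=
  (1 / Real.pi) * ∫ y : ℝ, Real.sin (N * (x - y)) / (x - y) * g y

/-- **Decay estimate for the Dirichlet operator away from the support.**
If `f` is `C¹` with support in `[−T, T]` and `|x| ≥ 2T + 1`, then
`|F_N f(x)| ≤ (‖f‖_∞ + ‖f′‖_∞)/(πN) · log(1 + 2T/(|x| − T))`. -/
theorem dirichletOp_decay_estimate (T : ℝ) (hT : 0 < T) (f : ℝ → ℝ)
    (hf : ContDiff ℝ 1 f) (hsupp : tsupport f ⊆ Set.Icc (-T) T)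
    (N : ℝ) (hN : 0 < N) (x : ℝ) (hx : 2 * T + 1 ≤ |x|) :
    |dirichletOp N f x| ≤
      ((⨆ y : ℝ, |f y|) + ⨆ y : ℝ, |deriv f y|) / (Real.pi * N)
        * Real.log (1 + 2 * T / (|x| - T)) := by
  rw [dirichletOp]
  have hπ : 0 < Real.pi := Real.pi_pos
  have hT' : -T ≤ T := by linarith
  have hfc : Continuous f := hf.continuous
  have hf'c : Continuous (deriv f) := hf.continuous_deriv le_rfl
  have hcs : HasCompactSupport f :=
    IsCompact.of_isClosed_subset isCompact_Icc (isClosed_tsupport f) hsupp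
  have hzero : ∀ y, y ∉ Set.Icc (-T) T → f y = 0 := fun y hy =>
    image_eq_zero_of_notMem_tsupport (fun h => hy (hsupp h))
  have hfT : f T = 0 := cont_zero_right hfc (fun y hy =>
    hzero y (by simp [Set.mem_Icc]; intro; linarith))
  have hfmT : f (-T) = 0 := cont_zero_left hfc (fun y hy =>
    hzero y (by simp [Set.mem_Icc]; intro; linarith))
  -- key positivity facts
  have hxy : ∀ y ∈ Set.Icc (-T) T, 1 ≤ |x - y| := by
    intro y hy
    have h1 : |y| ≤ T := abs_le.mpr ⟨hy.1, hy.2⟩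
    calc (1:ℝ) ≤ |x| - |y| := by linarith
    _ ≤ |x - y| := abs_sub_abs_le_abs_sub x y
  have hne : ∀ y ∈ Set.Icc (-T) T, x - y ≠ 0 := by
    intro y hy h
    have := hxy y hy
    rw [h] at this; simp at this; linarith
  -- step 1: reduce to interval integral
  have hstep1 : (∫ y : ℝ, Real.sin (N*(x-y))/(x-y) * f y)
      = ∫ y in (-T)..T, Real.sin (N*(x-y))/(x-y) * f y := by
    rw [eq_comm, intervalIntegral.integral_of_le hT',
      ← MeasureTheory.integral_Icc_eq_integral_Ioc]
    exact setIntegral_eq_integral_of_forall_compl_eq_zero fun y hy => by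
      rw [hzero y hy, mul_zero]
  -- derivatives
  have hud : ∀ y ∈ Set.uIcc (-T) T, HasDerivAt (fun y => f y * (x - y)⁻¹)
      (deriv f y * (x - y)⁻¹ + f y * ((x - y)^2)⁻¹) y := by
    intro y hy
    rw [Set.uIcc_of_le hT'] at hy
    have hsub : HasDerivAt (fun y : ℝ => x - y) (-1) y := (hasDerivAt_id y).const_sub x
    have hinv : HasDerivAt (fun y : ℝ => (x - y)⁻¹) (((x - y)^2)⁻¹) y := by
      have h : HasDerivAt (fun y : ℝ => (x - y)⁻¹) (- -1 / (x - y) ^ 2) y := hsub.inv (hne y hy)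
      convert h using 1
      rw [neg_neg, one_div]
    exact (((hf.differentiable one_ne_zero) y).hasDerivAt).mul hinv
  have hvd : ∀ y ∈ Set.uIcc (-T) T, HasDerivAt (fun y => Real.cos (N*(x-y))/N)
      (Real.sin (N*(x-y))) y := by
    intro y hy
    have hsub : HasDerivAt (fun y : ℝ => N * (x - y)) (-N) y := by
      simpa using ((hasDerivAt_id y).const_sub x).const_mul N
    have h : HasDerivAt (fun y => Real.cos (N*(x-y))/N) (-Real.sin (N * (x - y)) * -N / N) y :=
      by have h0 := ((Real.hasDerivAt_cos (N*(x-y))).comp y hsub).div_const N; exact h0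
    convert h using 1
    rw [neg_mul_neg, mul_div_assoc, div_self hN.ne', mul_one]
  -- continuity / integrability
  have hneu : ∀ y ∈ Set.uIcc (-T) T, x - y ≠ 0 := fun y hy =>
    hne y (by rwa [Set.uIcc_of_le hT'] at hy)
  have hcont_inv : ContinuousOn (fun y : ℝ => (x - y)⁻¹) (Set.uIcc (-T) T) :=
    ContinuousOn.inv₀ ((continuous_const.sub continuous_id).continuousOn) hneu
  have hcont_inv2 : ContinuousOn (fun y : ℝ => ((x - y)^2)⁻¹) (Set.uIcc (-T) T) :=
    ContinuousOn.inv₀ (((continuous_const.sub continuous_id).pow 2).continuousOn)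
      (fun y hy => pow_ne_zero 2 (hneu y hy))
  have hcont_u' : ContinuousOn
      (fun y => deriv f y * (x - y)⁻¹ + f y * ((x - y)^2)⁻¹) (Set.uIcc (-T) T) :=
    (hf'c.continuousOn.mul hcont_inv).add (hfc.continuousOn.mul hcont_inv2)
  have hint_u' : IntervalIntegrable
      (fun y => deriv f y * (x - y)⁻¹ + f y * ((x - y)^2)⁻¹) volume (-T) T :=
    hcont_u'.intervalIntegrable
  have hcNx : Continuous (fun y : ℝ => N * (x - y)) :=
    continuous_const.mul (continuous_const.sub continuous_id)
  have hint_v' : IntervalIntegrable (fun y => Real.sin (N*(x-y))) volume (-T) T :=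
    (Real.continuous_sin.comp hcNx).intervalIntegrable _ _
  -- integration by parts
  have hIBP : (∫ y in (-T)..T, (f y * (x - y)⁻¹) * Real.sin (N*(x-y)))
      = - ∫ y in (-T)..T, (deriv f y * (x - y)⁻¹ + f y * ((x - y)^2)⁻¹)
          * (Real.cos (N*(x-y))/N) := by
    have h0 := intervalIntegral.integral_mul_deriv_eq_deriv_mul hud hvd hint_u' hint_v'
    rw [h0, hfT, hfmT]
    ring
  have hcongr : (∫ y in (-T)..T, Real.sin (N*(x-y))/(x-y) * f y)
      = ∫ y in (-T)..T, (f y * (x - y)⁻¹) * Real.sin (N*(x-y)) :=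
    intervalIntegral.integral_congr (fun y hy => by rw [div_eq_mul_inv]; ring)
  -- sup bounds
  have hbdd1 : BddAbove (Set.range fun y => |f y|) :=
    (hfc.abs).bddAbove_range_of_hasCompactSupport hcs.abs
  have hbdd2 : BddAbove (Set.range fun y => |deriv f y|) :=
    (hf'c.abs).bddAbove_range_of_hasCompactSupport hcs.deriv.abs
  have hb1 : ∀ y, |f y| ≤ ⨆ y, |f y| := fun y => le_ciSup hbdd1 y
  have hb2 : ∀ y, |deriv f y| ≤ ⨆ y, |deriv f y| := fun y => le_ciSup hbdd2 y
  set M : ℝ := (⨆ y : ℝ, |f y|) + ⨆ y : ℝ, |deriv f y| with hM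
  have hM0 : 0 ≤ M := by
    have := hb1 0; have := hb2 0
    have := abs_nonneg (f 0); have := abs_nonneg (deriv f 0)
    rw [hM]; linarith
  -- pointwise bound
  have hpt : ∀ y ∈ Set.Icc (-T) T,
      |(deriv f y * (x - y)⁻¹ + f y * ((x - y)^2)⁻¹) * (Real.cos (N*(x-y))/N)|
      ≤ M/N * |x - y|⁻¹ := by
    intro y hy
    have h1 := hxy y hy
    have h0 : (0:ℝ) < |x - y| := lt_of_lt_of_le one_pos h1
    have hinv0 : (0:ℝ) ≤ |x - y|⁻¹ := by positivity
    have hcosb : |Real.cos (N*(x-y))/N| ≤ 1/N := by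
      rw [abs_div, abs_of_pos hN]
      gcongr
      exact Real.abs_cos_le_one _
    have hA : |deriv f y * (x - y)⁻¹ + f y * ((x - y)^2)⁻¹| ≤ M * |x - y|⁻¹ := by
      have e1 : (|x - y|^2)⁻¹ ≤ |x - y|⁻¹ := by
        apply inv_anti₀ h0
        nlinarith
      calc |deriv f y * (x - y)⁻¹ + f y * ((x - y)^2)⁻¹|
          ≤ |deriv f y| * |x - y|⁻¹ + |f y| * (|x - y|^2)⁻¹ := by
            refine (abs_add_le _ _).trans ?_
            rw [abs_mul, abs_mul, abs_inv, abs_inv, abs_pow]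
      _ ≤ |deriv f y| * |x - y|⁻¹ + |f y| * |x - y|⁻¹ := by
            gcongr
      _ ≤ M * |x - y|⁻¹ := by
            have := hb1 y; have := hb2 y
            have := abs_nonneg (f y)
            rw [hM]
            nlinarith
    calc |(deriv f y * (x - y)⁻¹ + f y * ((x - y)^2)⁻¹) * (Real.cos (N*(x-y))/N)|
        = |deriv f y * (x - y)⁻¹ + f y * ((x - y)^2)⁻¹| * |Real.cos (N*(x-y))/N| :=
          abs_mul _ _
    _ ≤ (M * |x - y|⁻¹) * (1/N) := by
          apply mul_le_mul hA hcosb (abs_nonneg _)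
          positivity
    _ = M/N * |x - y|⁻¹ := by ring
  -- integral bound
  have hint_K : IntervalIntegrable
      (fun y => |(deriv f y * (x - y)⁻¹ + f y * ((x - y)^2)⁻¹) * (Real.cos (N*(x-y))/N)|)
      volume (-T) T := by
    apply ContinuousOn.intervalIntegrable
    exact (hcont_u'.mul ((Real.continuous_cos.comp hcNx).div_const N).continuousOn).abs
  have hint_B : IntervalIntegrable (fun y => M/N * |x - y|⁻¹) volume (-T) T := by
    apply ContinuousOn.intervalIntegrable
    exact continuousOn_const.mul
      (ContinuousOn.inv₀ ((continuous_const.sub continuous_id).abs.continuousOn)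
        (fun y hy => abs_ne_zero.mpr (hneu y hy)))
  have hKle : |∫ y in (-T)..T, (deriv f y * (x - y)⁻¹ + f y * ((x - y)^2)⁻¹)
        * (Real.cos (N*(x-y))/N)|
      ≤ M/N * Real.log (1 + 2*T/(|x|-T)) := by
    calc |∫ y in (-T)..T, (deriv f y * (x - y)⁻¹ + f y * ((x - y)^2)⁻¹)
          * (Real.cos (N*(x-y))/N)|
        ≤ ∫ y in (-T)..T,
            |(deriv f y * (x - y)⁻¹ + f y * ((x - y)^2)⁻¹) * (Real.cos (N*(x-y))/N)| :=
          intervalIntegral.abs_integral_le_integral_abs hT'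
    _ ≤ ∫ y in (-T)..T, M/N * |x - y|⁻¹ :=
          intervalIntegral.integral_mono_on hT' hint_K hint_B hpt
    _ = M/N * Real.log (1 + 2*T/(|x|-T)) := by
          rw [intervalIntegral.integral_const_mul, integral_abs_inv_eq T x hT hx]
  -- conclusion
  calc |(1 / Real.pi) * ∫ y : ℝ, Real.sin (N * (x - y)) / (x - y) * f y|
      = (1/Real.pi) * |∫ y in (-T)..T, (deriv f y * (x - y)⁻¹ + f y * ((x - y)^2)⁻¹)
          * (Real.cos (N*(x-y))/N)| := by
        rw [hstep1, hcongr, hIBP, abs_mul, abs_neg, abs_of_pos (by positivity : (0:ℝ) < 1/Real.pi)]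
  _ ≤ (1/Real.pi) * (M/N * Real.log (1 + 2*T/(|x|-T))) := by
        apply mul_le_mul_of_nonneg_left hKle
        positivity
  _ = M / (Real.pi * N) * Real.log (1 + 2 * T / (|x| - T)) := by
        field_simp
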